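/- Let 1 <= l <= min(r,s), put lambda = lambda_l(r,s) and l_0 = min{ i : lambda_i(r,s) = lambda }. Then there exists a unique element y of the subspace D_{r+s-l_0} of M(r,s) such that T^{lambda-1}(y) = x_{r+s+1-l_0-lambda}. -/

import Mathlib

open scoped BigOperators

noncomputable section

/-- The basis vector `v_{a,b}` of `M(r,s)` (1-indexed), read as `0` when
`a` or `b` is out of range. -/
def vv (F : Type*) [Field F] (r s : ℕ) (a b : ℤ) : Matrix (Fin r) (Fin s) F :=
  Matrix.of fun i j => if (i : ℤ) + 1 = a ∧ (j : ℤ) + 1 = b then 1 else 0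

/-- The linear endomorphism `T` of `M(r,s)` with `T(v_{i,j}) = v_{i-1,j} + v_{i,j-1}`
(out-of-range symbols read as `0`); it models the action of `g - 1`. -/
def TT (F : Type*) [Field F] (r s : ℕ) :
    Matrix (Fin r) (Fin s) F →ₗ[F] Matrix (Fin r) (Fin s) F where
  toFun A := Matrix.of fun i j =>
    (if h : (i : ℕ) + 1 < r then A ⟨(i : ℕ) + 1, h⟩ j else 0) +
    (if h : (j : ℕ) + 1 < s then A i ⟨(j : ℕ) + 1, h⟩ else 0)
  map_add' A B := by
    ext i j
    simp only [Matrix.of_apply, Matrix.add_apply]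
    split_ifs <;> abel
  map_smul' c A := by
    ext i j
    simp only [Matrix.of_apply, Matrix.smul_apply, RingHom.id_apply, smul_eq_mul]
    split_ifs <;> ring

/-- `x_m = ∑_{j=1}^m (-1)^{j-1} v_{j, m+1-j}` (the empty sum if `m ≤ 0`). -/
def xx (F : Type*) [Field F] (r s : ℕ) (m : ℤ) : Matrix (Fin r) (Fin s) F :=
  ∑ j ∈ Finset.range m.toNat, ((-1 : F) ^ j) • vv F r s ((j : ℤ) + 1) (m - j)

/-- The subspace `D_d` of `M(r,s)`, spanned by the `v_{i,j}` with `i + j = d + 1`. -/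
def Dd (F : Type*) [Field F] (r s : ℕ) (d : ℕ) :
    Submodule F (Matrix (Fin r) (Fin s) F) :=
  Submodule.span F { A | ∃ a b : ℕ, 1 ≤ a ∧ a ≤ r ∧ 1 ≤ b ∧ b ≤ s ∧
    a + b = d + 1 ∧ A = vv F r s (a : ℤ) (b : ℤ) }

/-- Binomial coefficient `C(a,b)` as an element of `F`, with the convention that
it is `0` when `b < 0` or `b > a`. -/
def binF (F : Type*) [Field F] (a b : ℤ) : F :=
  if 0 ≤ b ∧ b ≤ a then (Nat.choose a.toNat b.toNat : F) else 0

/-- `lam` (restricted to indices `1,…,min r s`) is the Jordan type of the nilpotent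
operator `T` on `M(r,s)`: a nonincreasing list of `min r s` positive integers such that
for each `m ≥ 1` the number of parts `≥ m` is `rank T^{m-1} - rank T^m`. -/
def IsJordanType (F : Type*) [Field F] (r s : ℕ) (lam : ℕ → ℕ) : Prop :=
  (∀ l, 1 ≤ l → l ≤ min r s → 0 < lam l) ∧
  (∀ l l', 1 ≤ l → l ≤ l' → l' ≤ min r s → lam l' ≤ lam l) ∧
  ∀ m, 1 ≤ m →
    ((Finset.Icc 1 (min r s)).filter fun l => m ≤ lam l).card =
      Module.finrank F ↥(LinearMap.range ((TT F r s) ^ (m - 1))) -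
      Module.finrank F ↥(LinearMap.range ((TT F r s) ^ m))

namespace St

open Finset Submodule LinearMap Module

variable (F : Type*) [Field F] (r s : ℕ)

/-- Multiplication by `x` (row shift). -/
def SS : Matrix (Fin r) (Fin s) F →ₗ[F] Matrix (Fin r) (Fin s) F where
  toFun A := Matrix.of fun i j => if h : (i : ℕ) + 1 < r then A ⟨(i : ℕ) + 1, h⟩ j else 0
  map_add' A B := by
    ext i j
    simp only [Matrix.of_apply, Matrix.add_apply]
    split_ifs <;> simp
  map_smul' c A := by
    ext i j
    simp only [Matrix.of_apply, Matrix.smul_apply, RingHom.id_apply, smul_eq_mul]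
    split_ifs <;> ring

/-- Projection onto the `d`-th antidiagonal. -/
def projM (d : ℕ) : Matrix (Fin r) (Fin s) F →ₗ[F] Matrix (Fin r) (Fin s) F where
  toFun A := Matrix.of fun i j => if (i : ℕ) + (j : ℕ) + 1 = d then A i j else 0
  map_add' A B := by
    ext i j
    simp only [Matrix.of_apply, Matrix.add_apply]
    split_ifs <;> simp
  map_smul' c A := by
    ext i j
    simp only [Matrix.of_apply, Matrix.smul_apply, RingHom.id_apply, smul_eq_mul]
    split_ifs <;> ring

def xv (m : ℕ) : Matrix (Fin r) (Fin s) F := xx F r s (m : ℤ)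

def onDiag (d : ℕ) (A : Matrix (Fin r) (Fin s) F) : Prop :=
  ∀ (i : Fin r) (j : Fin s), (i : ℕ) + (j : ℕ) + 1 ≠ d → A i j = 0

/-- The `d`-th antidiagonal as a coordinate subspace. -/
def WD (d : ℕ) : Submodule F (Matrix (Fin r) (Fin s) F) where
  carrier := {A | onDiag F r s d A}
  add_mem' := by
    intro A B hA hB i j hij
    simp [Matrix.add_apply, hA i j hij, hB i j hij]
  zero_mem' := by intro i j _; simp
  smul_mem' := by
    intro c A hA i j hij
    simp [Matrix.smul_apply, hA i j hij]

variable {F r s}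

lemma TT_apply (A : Matrix (Fin r) (Fin s) F) (i : Fin r) (j : Fin s) :
    TT F r s A i j =
      (if h : (i : ℕ) + 1 < r then A ⟨(i : ℕ) + 1, h⟩ j else 0) +
      (if h : (j : ℕ) + 1 < s then A i ⟨(j : ℕ) + 1, h⟩ else 0) := rfl

lemma SS_apply (A : Matrix (Fin r) (Fin s) F) (i : Fin r) (j : Fin s) :
    SS F r s A i j = if h : (i : ℕ) + 1 < r then A ⟨(i : ℕ) + 1, h⟩ j else 0 := rfl

lemma projM_apply (d : ℕ) (A : Matrix (Fin r) (Fin s) F) (i : Fin r) (j : Fin s) :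
    projM F r s d A i j = if (i : ℕ) + (j : ℕ) + 1 = d then A i j else 0 := rfl

lemma vv_apply (a b : ℤ) (i : Fin r) (j : Fin s) :
    vv F r s a b i j = if (i : ℤ) + 1 = a ∧ (j : ℤ) + 1 = b then 1 else 0 := rfl

lemma mem_WD_iff (d : ℕ) (A : Matrix (Fin r) (Fin s) F) :
    A ∈ WD F r s d ↔ onDiag F r s d A := Iff.rfl

lemma xv_apply (m : ℕ) (i : Fin r) (j : Fin s) :
    xv F r s m i j = if (i : ℕ) + (j : ℕ) + 1 = m then (-1 : F) ^ (i : ℕ) else 0 := by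
  unfold xv xx
  rw [Matrix.sum_apply]
  simp only [Int.toNat_natCast, Matrix.smul_apply, vv_apply, smul_eq_mul]
  by_cases h : (i : ℕ) + (j : ℕ) + 1 = m
  · rw [if_pos h, Finset.sum_eq_single (i : ℕ)]
    · have : ((i : ℤ) + 1 = (i : ℕ) + 1 ∧ (j : ℤ) + 1 = (m : ℤ) - (i : ℕ)) := by
        constructor <;> [push_cast; skip] <;> [ring; omega]
      rw [if_pos this, mul_one]
    · intro b _ hb
      rw [if_neg, mul_zero]
      rintro ⟨h1, -⟩
      exact hb (by omega)
    · intro hi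
      exact absurd (Finset.mem_range.2 (by omega)) hi
  · rw [if_neg h, Finset.sum_eq_zero]
    intro b _
    rw [if_neg, mul_zero]
    rintro ⟨h1, h2⟩
    omega

lemma xv_onDiag (m : ℕ) : onDiag F r s m (xv F r s m) := by
  intro i j hij
  rw [xv_apply, if_neg hij]

lemma xv_mem_WD (m : ℕ) : xv F r s m ∈ WD F r s m := xv_onDiag m

/-- `Dd` coincides with the coordinate description `WD`. -/
lemma Dd_eq_WD (d : ℕ) : Dd F r s d = WD F r s d := by
  apply le_antisymm
  · rw [Dd, Submodule.span_le]
    rintro A ⟨a, b, ha1, ha2, hb1, hb2, hab, rfl⟩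
    intro i j hij
    rw [vv_apply, if_neg]
    rintro ⟨h1, h2⟩
    omega
  · intro A hA
    have hdec : A = ∑ i : Fin r, ∑ j : Fin s,
        A i j • vv F r s ((i : ℕ) + 1 : ℕ) ((j : ℕ) + 1 : ℕ) := by
      ext i j
      rw [Matrix.sum_apply]
      rw [Finset.sum_eq_single i]
      · rw [Matrix.sum_apply, Finset.sum_eq_single j]
        · rw [Matrix.smul_apply, vv_apply, if_pos ⟨by push_cast; ring, by push_cast; ring⟩,
            smul_eq_mul, mul_one]
        · intro b _ hb
          rw [Matrix.smul_apply, vv_apply, if_neg, smul_eq_mul, mul_zero]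
          rintro ⟨-, h2⟩
          exact hb (Fin.ext (by omega))
        · intro hj; exact absurd (Finset.mem_univ j) hj
      · intro b _ hb
        rw [Matrix.sum_apply, Finset.sum_eq_zero]
        intro c _
        rw [Matrix.smul_apply, vv_apply, if_neg, smul_eq_mul, mul_zero]
        rintro ⟨h1, -⟩
        exact hb (Fin.ext (by omega))
      · intro hi; exact absurd (Finset.mem_univ i) hi
    rw [hdec]
    apply Submodule.sum_mem
    intro i _
    apply Submodule.sum_mem
    intro j _
    by_cases hij : (i : ℕ) + (j : ℕ) + 1 = d
    · apply Submodule.smul_mem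
      apply Submodule.subset_span
      exact ⟨(i : ℕ) + 1, (j : ℕ) + 1, by omega, by omega, by omega, by omega, by omega, rfl⟩
    · rw [hA i j hij, zero_smul]
      exact Submodule.zero_mem _



open Finset Submodule LinearMap Module

variable {F : Type*} [Field F] {r s : ℕ}

lemma projM_zero_eq (A : Matrix (Fin r) (Fin s) F) : projM F r s 0 A = 0 := by
  ext i j
  rw [projM_apply, if_neg (by omega)]
  rfl

lemma projM_mem_WD (d : ℕ) (A : Matrix (Fin r) (Fin s) F) : projM F r s d A ∈ WD F r s d := by
  intro i j hij
  rw [projM_apply, if_neg hij]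

lemma projM_eq_self {d : ℕ} {A : Matrix (Fin r) (Fin s) F} (hA : onDiag F r s d A) :
    projM F r s d A = A := by
  ext i j
  rw [projM_apply]
  by_cases h : (i : ℕ) + (j : ℕ) + 1 = d
  · rw [if_pos h]
  · rw [if_neg h, hA i j h]

lemma projM_eq_zero {d m : ℕ} {A : Matrix (Fin r) (Fin s) F} (hA : onDiag F r s m A)
    (hmd : m ≠ d) : projM F r s d A = 0 := by
  ext i j
  rw [projM_apply]
  by_cases h : (i : ℕ) + (j : ℕ) + 1 = d
  · rw [if_pos h, hA i j (by omega)]; rfl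
  · rw [if_neg h]; rfl

lemma TT_projM_succ (e : ℕ) (A : Matrix (Fin r) (Fin s) F) :
    TT F r s (projM F r s (e + 1) A) = projM F r s e (TT F r s A) := by
  ext i j
  simp only [TT_apply, projM_apply]
  split_ifs <;> first | rfl | omega | simp_all | (exfalso; omega)

lemma pow_projM (k d : ℕ) (A : Matrix (Fin r) (Fin s) F) :
    ((TT F r s) ^ k) (projM F r s (d + k) A) = projM F r s d (((TT F r s) ^ k) A) := by
  induction k generalizing A with
  | zero => simp [pow_zero, Module.End.one_apply]
  | succ k ih =>
    have h1 : (TT F r s) ^ (k + 1) = (TT F r s) ^ k * TT F r s := pow_succ _ _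
    rw [h1, Module.End.mul_apply, Module.End.mul_apply,
      show d + (k + 1) = (d + k) + 1 by omega, TT_projM_succ, ih]

lemma WD_step {e : ℕ} {A : Matrix (Fin r) (Fin s) F} (hA : A ∈ WD F r s (e + 1)) :
    TT F r s A ∈ WD F r s e := by
  intro i j hij
  rw [TT_apply]
  have h1 : ∀ (h : (i : ℕ) + 1 < r), A ⟨(i : ℕ) + 1, h⟩ j = 0 := fun h =>
    hA ⟨(i : ℕ) + 1, h⟩ j (by simpa using fun hh => hij (by omega))
  have h2 : ∀ (h : (j : ℕ) + 1 < s), A i ⟨(j : ℕ) + 1, h⟩ = 0 := fun h =>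
    hA i ⟨(j : ℕ) + 1, h⟩ (by simpa using fun hh => hij (by omega))
  split_ifs with hh1 hh2 hh2
  · rw [h1 hh1, h2 hh2, add_zero]
  · rw [h1 hh1, add_zero]
  · rw [h2 hh2, zero_add]
  · rw [add_zero]

lemma WD_pow {d k : ℕ} {A : Matrix (Fin r) (Fin s) F} (hA : A ∈ WD F r s (d + k)) :
    ((TT F r s) ^ k) A ∈ WD F r s d := by
  induction k generalizing A with
  | zero => simpa [pow_zero, Module.End.one_apply] using hA
  | succ k ih =>
    have h1 : (TT F r s) ^ (k + 1) = (TT F r s) ^ k * TT F r s := pow_succ _ _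
    rw [h1, Module.End.mul_apply]
    exact ih (WD_step (by rwa [show d + (k + 1) = (d + k) + 1 by omega] at hA))

lemma WD_zero_eq {A : Matrix (Fin r) (Fin s) F} (hA : A ∈ WD F r s 0) : A = 0 := by
  ext i j
  rw [hA i j (by omega)]
  rfl

lemma sum_projM (A : Matrix (Fin r) (Fin s) F) :
    ∑ d ∈ Finset.range (r + s), projM F r s d A = A := by
  ext i j
  rw [Matrix.sum_apply]
  simp only [projM_apply]
  rw [Finset.sum_ite_eq (Finset.range (r + s)) ((i : ℕ) + (j : ℕ) + 1) (fun _ => A i j)]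
  rw [if_pos (Finset.mem_range.2 (by omega))]

lemma TT_nilpotent : (TT F r s) ^ (r + s) = 0 := by
  apply LinearMap.ext
  intro A
  rw [LinearMap.zero_apply, ← sum_projM A, map_sum]
  apply Finset.sum_eq_zero
  intro d hd
  have hd' : d < r + s := Finset.mem_range.1 hd
  have hsplit : (TT F r s) ^ (r + s) = (TT F r s) ^ (r + s - d) * (TT F r s) ^ d := by
    rw [← pow_add]
    congr 1
    omega
  rw [hsplit, Module.End.mul_apply]
  have h0 : ((TT F r s) ^ d) (projM F r s d A) ∈ WD F r s 0 := by
    apply WD_pow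
    simpa using projM_mem_WD d A
  rw [WD_zero_eq h0, map_zero]

lemma TT_SS_comm (A : Matrix (Fin r) (Fin s) F) :
    TT F r s (SS F r s A) = SS F r s (TT F r s A) := by
  ext i j
  simp only [TT_apply, SS_apply]
  split_ifs <;> first | rfl | omega | simp_all | (exfalso; omega)

lemma SS_pow_comm (k : ℕ) (A : Matrix (Fin r) (Fin s) F) :
    SS F r s (((TT F r s) ^ k) A) = ((TT F r s) ^ k) (SS F r s A) := by
  induction k generalizing A with
  | zero => simp [pow_zero, Module.End.one_apply]
  | succ k ih =>
    have h1 : (TT F r s) ^ (k + 1) = (TT F r s) ^ k * TT F r s := pow_succ _ _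
    rw [h1, Module.End.mul_apply, Module.End.mul_apply, ih, TT_SS_comm]

lemma TT_xv (m : ℕ) (hm : m ≤ min r s) : TT F r s (xv F r s m) = 0 := by
  ext i j
  rw [TT_apply]
  simp only [xv_apply]
  have hr' : min r s ≤ r := Nat.min_le_left _ _
  have hs' : min r s ≤ s := Nat.min_le_right _ _
  have hz : (0 : Matrix (Fin r) (Fin s) F) i j = 0 := rfl
  rw [hz]
  split_ifs <;> first | rfl | omega | (rw [pow_succ]; ring) | simp

lemma SS_xv (m : ℕ) (hm1 : 1 ≤ m) (hm : m ≤ min r s) :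
    SS F r s (xv F r s m) = - xv F r s (m - 1) := by
  ext i j
  rw [SS_apply, Matrix.neg_apply]
  simp only [xv_apply]
  have hr' : min r s ≤ r := Nat.min_le_left _ _
  split_ifs <;> first | rfl | omega | (rw [pow_succ]; ring) | simp


variable (F r s) in
/-- The duality pairing `⟨A,B⟩ = ∑ A i j * B (rev i) (rev j)`. -/
def pairB : Matrix (Fin r) (Fin s) F →ₗ[F] Matrix (Fin r) (Fin s) F →ₗ[F] F :=
  LinearMap.mk₂ F (fun A B => ∑ i : Fin r, ∑ j : Fin s, A i j * B i.rev j.rev)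
    (by
      intro A A' B
      rw [← Finset.sum_add_distrib]
      apply Finset.sum_congr rfl; intro i _
      rw [← Finset.sum_add_distrib]
      apply Finset.sum_congr rfl; intro j _
      rw [Matrix.add_apply, add_mul])
    (by
      intro c A B
      rw [smul_eq_mul, Finset.mul_sum]
      apply Finset.sum_congr rfl; intro i _
      rw [Finset.mul_sum]
      apply Finset.sum_congr rfl; intro j _
      rw [Matrix.smul_apply, smul_eq_mul, mul_assoc])
    (by
      intro A B B'
      rw [← Finset.sum_add_distrib]
      apply Finset.sum_congr rfl; intro i _
      rw [← Finset.sum_add_distrib]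
      apply Finset.sum_congr rfl; intro j _
      rw [Matrix.add_apply, mul_add])
    (by
      intro c A B
      rw [smul_eq_mul, Finset.mul_sum]
      apply Finset.sum_congr rfl; intro i _
      rw [Finset.mul_sum]
      apply Finset.sum_congr rfl; intro j _
      rw [Matrix.smul_apply, smul_eq_mul]
      ring)

lemma pairB_apply (A B : Matrix (Fin r) (Fin s) F) :
    pairB F r s A B = ∑ i : Fin r, ∑ j : Fin s, A i j * B i.rev j.rev := rfl

/-- Shift lemma for sums over `Fin n`. -/
lemma dite_shift_sum {β : Type*} [AddCommMonoid β] {n : ℕ} (f : Fin n → Fin n → β) :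
    ∑ i : Fin n, (if h : (i : ℕ) + 1 < n then f ⟨(i : ℕ) + 1, h⟩ i else 0)
      = ∑ i : Fin n, (if h : 1 ≤ (i : ℕ) then
          f i ⟨(i : ℕ) - 1, lt_of_le_of_lt (Nat.sub_le _ _) i.isLt⟩ else 0) := by
  classical
  set g : ℕ → β := fun k => if h : k < n ∧ 1 ≤ k then f ⟨k, h.1⟩ ⟨k - 1, by omega⟩ else 0 with hg
  have hL : ∀ i : Fin n, (if h : (i : ℕ) + 1 < n then f ⟨(i : ℕ) + 1, h⟩ i else 0)
      = g ((i : ℕ) + 1) := by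
    intro i
    simp only [hg]
    by_cases h : (i : ℕ) + 1 < n
    · rw [dif_pos h, dif_pos (show (i:ℕ)+1 < n ∧ 1 ≤ (i:ℕ)+1 from ⟨h, by omega⟩)]
      exact congrArg (f ⟨(i:ℕ)+1, h⟩) (Fin.ext (by simp only [Fin.val_mk]; omega))
    · rw [dif_neg h, dif_neg (show ¬((i:ℕ)+1 < n ∧ 1 ≤ (i:ℕ)+1) by omega)]
  have hR : ∀ i : Fin n, (if h : 1 ≤ (i : ℕ) then
      f i ⟨(i : ℕ) - 1, lt_of_le_of_lt (Nat.sub_le _ _) i.isLt⟩ else 0) = g (i : ℕ) := by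
    intro i
    simp only [hg]
    by_cases h : 1 ≤ (i : ℕ)
    · rw [dif_pos h, dif_pos (show (i:ℕ) < n ∧ 1 ≤ (i:ℕ) from ⟨i.isLt, h⟩)]
    · rw [dif_neg h, dif_neg (show ¬((i:ℕ) < n ∧ 1 ≤ (i:ℕ)) by omega)]
  calc ∑ i : Fin n, (if h : (i : ℕ) + 1 < n then f ⟨(i : ℕ) + 1, h⟩ i else 0)
      = ∑ i : Fin n, g ((i : ℕ) + 1) := Finset.sum_congr rfl (fun i _ => hL i)
    _ = ∑ k ∈ Finset.range n, g (k + 1) := Fin.sum_univ_eq_sum_range (fun k => g (k + 1)) n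
    _ = ∑ k ∈ Finset.range n, g k := by
        have h1 : ∑ k ∈ Finset.range (n + 1), g k
            = ∑ k ∈ Finset.range n, g (k + 1) + g 0 := Finset.sum_range_succ' g n
        have h2 : ∑ k ∈ Finset.range (n + 1), g k
            = ∑ k ∈ Finset.range n, g k + g n := Finset.sum_range_succ g n
        have h0 : g 0 = 0 := by
          simp only [hg]
          exact dif_neg (by omega)
        have hn : g n = 0 := by
          simp only [hg]
          exact dif_neg (by omega)
        rw [h0, add_zero] at h1
        rw [hn, add_zero] at h2
        rw [← h1, h2]
    _ = ∑ i : Fin n, g (i : ℕ) := (Fin.sum_univ_eq_sum_range (fun k => g k) n).symm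
    _ = _ := Finset.sum_congr rfl (fun i _ => (hR i).symm)

lemma pairB_adjoint (A B : Matrix (Fin r) (Fin s) F) :
    pairB F r s (TT F r s A) B = pairB F r s A (TT F r s B) := by
  simp only [pairB_apply, TT_apply, add_mul, mul_add, Finset.sum_add_distrib]
  congr 1
  · -- row shift terms
    rw [Finset.sum_comm]
    conv_rhs => rw [Finset.sum_comm]
    apply Finset.sum_congr rfl; intro j _
    have key := dite_shift_sum (n := r) (fun k i => A k j * B i.rev j.rev)
    have hL : ∀ i : Fin r,
        (if h : (i : ℕ) + 1 < r then A ⟨(i : ℕ) + 1, h⟩ j else 0) * B i.rev j.rev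
          = (if h : (i : ℕ) + 1 < r then A ⟨(i : ℕ) + 1, h⟩ j * B i.rev j.rev else 0) := by
      intro i; split_ifs <;> simp
    rw [Finset.sum_congr rfl (fun i _ => hL i), key]
    apply Finset.sum_congr rfl; intro i _
    by_cases h : 1 ≤ (i : ℕ)
    · rw [dif_pos h]
      have hc : ((i.rev : ℕ)) + 1 < r := by
        rw [Fin.val_rev]; omega
      rw [dif_pos hc]
      have he : (Fin.mk ((i:ℕ)-1) (lt_of_le_of_lt (Nat.sub_le _ _) i.isLt) : Fin r).rev
          = ⟨(i.rev:ℕ)+1, hc⟩ := Fin.ext (by simp only [Fin.val_rev, Fin.val_mk]; omega)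
      exact congrArg₂ (· * ·) rfl (congrFun (congrArg B he) j.rev)
    · rw [dif_neg h]
      have hc : ¬ ((i.rev : ℕ)) + 1 < r := by
        rw [Fin.val_rev]; omega
      rw [dif_neg hc, mul_zero]
  · -- column shift terms
    apply Finset.sum_congr rfl; intro i _
    have key := dite_shift_sum (n := s) (fun k j => A i k * B i.rev j.rev)
    have hL : ∀ j : Fin s,
        (if h : (j : ℕ) + 1 < s then A i ⟨(j : ℕ) + 1, h⟩ else 0) * B i.rev j.rev
          = (if h : (j : ℕ) + 1 < s then A i ⟨(j : ℕ) + 1, h⟩ * B i.rev j.rev else 0) := by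
      intro j; split_ifs <;> simp
    rw [Finset.sum_congr rfl (fun j _ => hL j), key]
    apply Finset.sum_congr rfl; intro j _
    by_cases h : 1 ≤ (j : ℕ)
    · rw [dif_pos h]
      have hc : ((j.rev : ℕ)) + 1 < s := by
        rw [Fin.val_rev]; omega
      rw [dif_pos hc]
      have he : (Fin.mk ((j:ℕ)-1) (lt_of_le_of_lt (Nat.sub_le _ _) j.isLt) : Fin s).rev
          = ⟨(j.rev:ℕ)+1, hc⟩ := Fin.ext (by simp only [Fin.val_rev, Fin.val_mk]; omega)
      exact congrArg₂ (· * ·) rfl (congrArg (B i.rev) he)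
    · rw [dif_neg h]
      have hc : ¬ ((j.rev : ℕ)) + 1 < s := by
        rw [Fin.val_rev]; omega
      rw [dif_neg hc, mul_zero]

lemma pairB_pow_adjoint (k : ℕ) (A B : Matrix (Fin r) (Fin s) F) :
    pairB F r s (((TT F r s) ^ k) A) B = pairB F r s A (((TT F r s) ^ k) B) := by
  induction k generalizing A B with
  | zero => simp [pow_zero, Module.End.one_apply]
  | succ k ih =>
    have h1 : (TT F r s) ^ (k + 1) = (TT F r s) ^ k * TT F r s := pow_succ _ _
    have h2 : (TT F r s) ^ (k + 1) = TT F r s * (TT F r s) ^ k := pow_succ' _ _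
    calc pairB F r s (((TT F r s) ^ (k+1)) A) B
        = pairB F r s (((TT F r s) ^ k) (TT F r s A)) B := by rw [h1, Module.End.mul_apply]
      _ = pairB F r s (TT F r s A) (((TT F r s) ^ k) B) := ih _ _
      _ = pairB F r s A (TT F r s (((TT F r s) ^ k) B)) := pairB_adjoint _ _
      _ = pairB F r s A (((TT F r s) ^ (k+1)) B) := by rw [h2, Module.End.mul_apply]

lemma pairB_deg {d1 d2 : ℕ} {A B : Matrix (Fin r) (Fin s) F} (hA : onDiag F r s d1 A)
    (hB : onDiag F r s d2 B) (hd : d1 + d2 ≠ r + s) : pairB F r s A B = 0 := by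
  rw [pairB_apply]
  apply Finset.sum_eq_zero; intro i _
  apply Finset.sum_eq_zero; intro j _
  by_cases h1 : (i : ℕ) + (j : ℕ) + 1 = d1
  · by_cases h2 : ((i.rev : ℕ)) + ((j.rev : ℕ)) + 1 = d2
    · exfalso
      rw [Fin.val_rev, Fin.val_rev] at h2
      have := i.isLt
      have := j.isLt
      omega
    · rw [hB i.rev j.rev h2, mul_zero]
  · rw [hA i j h1, zero_mul]

lemma pairB_injective : Function.Injective (pairB F r s) := by
  have hz : ∀ A : Matrix (Fin r) (Fin s) F, pairB F r s A = 0 → A = 0 := by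
    intro A hA
    ext i j
    have h := congrFun (congrArg DFunLike.coe hA)
      (Matrix.of fun i' j' => if i' = i.rev ∧ j' = j.rev then (1 : F) else 0)
    rw [LinearMap.zero_apply] at h
    rw [pairB_apply] at h
    simp only [Matrix.of_apply] at h
    have h2 : ∑ i' : Fin r, ∑ j' : Fin s, A i' j' *
        (if i'.rev = i.rev ∧ j'.rev = j.rev then (1:F) else 0) = A i j := by
      rw [Finset.sum_eq_single i]
      · rw [Finset.sum_eq_single j]
        · rw [if_pos ⟨rfl, rfl⟩, mul_one]
        · intro b _ hb
          rw [if_neg, mul_zero]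
          rintro ⟨-, h2⟩
          exact hb (Fin.rev_inj.1 h2)
        · intro hj; exact absurd (Finset.mem_univ j) hj
      · intro b _ hb
        rw [Finset.sum_eq_zero]
        intro c _
        rw [if_neg, mul_zero]
        rintro ⟨h1, -⟩
        exact hb (Fin.rev_inj.1 h1)
      · intro hi; exact absurd (Finset.mem_univ i) hi
    rw [h2] at h
    simpa using h
  intro A B hAB
  have h0 : pairB F r s (A - B) = 0 := by rw [map_sub, hAB, sub_self]
  exact sub_eq_zero.1 (hz _ h0)


section Duality

variable {F : Type*} [Field F] {r s : ℕ}

lemma pairB_symm (A B : Matrix (Fin r) (Fin s) F) :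
    pairB F r s A B = pairB F r s B A := by
  rw [pairB_apply, pairB_apply]
  rw [← Equiv.sum_comp (Fin.revPerm : Equiv.Perm (Fin r))
    (fun i => ∑ j : Fin s, A i j * B i.rev j.rev)]
  apply Finset.sum_congr rfl; intro i _
  rw [← Equiv.sum_comp (Fin.revPerm : Equiv.Perm (Fin s))
    (fun j => A (Fin.revPerm i) j * B (Fin.revPerm i).rev j.rev)]
  apply Finset.sum_congr rfl; intro j _
  simp only [Fin.revPerm_apply, Fin.rev_rev]
  ring

lemma pairB_refl : LinearMap.IsRefl (pairB F r s) := by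
  intro x y h
  rw [pairB_symm]
  exact h

lemma pairB_nondeg : LinearMap.BilinForm.Nondegenerate (pairB F r s) := by
  unfold LinearMap.BilinForm.Nondegenerate
  rw [(pairB_refl (F := F) (r := r) (s := s)).nondegenerate_iff_separatingLeft]
  intro A hA
  apply pairB_injective (show pairB F r s A = pairB F r s 0 by
    rw [map_zero]
    exact LinearMap.ext hA)

lemma orth_sup (U V : Submodule F (Matrix (Fin r) (Fin s) F)) :
    LinearMap.BilinForm.orthogonal (pairB F r s) (U ⊔ V)
      = LinearMap.BilinForm.orthogonal (pairB F r s) U ⊓ LinearMap.BilinForm.orthogonal (pairB F r s) V := by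
  ext x
  constructor
  · intro hx
    exact ⟨fun n hn => hx n (Submodule.mem_sup_left hn),
      fun n hn => hx n (Submodule.mem_sup_right hn)⟩
  · rintro ⟨h1, h2⟩ n hn
    obtain ⟨u, hu, v, hv, rfl⟩ := Submodule.mem_sup.1 hn
    show pairB F r s (u + v) x = 0
    rw [map_add, LinearMap.add_apply, h1 u hu, h2 v hv, add_zero]

lemma orth_range_T :
    LinearMap.BilinForm.orthogonal (pairB F r s) (LinearMap.range (TT F r s)) = LinearMap.ker (TT F r s) := by
  symm
  apply Submodule.eq_of_le_of_finrank_le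
  · intro x hx
    rintro n ⟨v, rfl⟩
    show pairB F r s (TT F r s v) x = 0
    rw [pairB_adjoint, (LinearMap.mem_ker).1 hx, map_zero]
  · have h1 := LinearMap.BilinForm.finrank_orthogonal (B := pairB F r s) pairB_nondeg
      (LinearMap.range (TT F r s))
    have h2 := LinearMap.finrank_range_add_finrank_ker (TT F r s)
    omega

lemma orth_ker_pow (j : ℕ) :
    LinearMap.BilinForm.orthogonal (pairB F r s) (LinearMap.ker ((TT F r s) ^ j))
      = LinearMap.range ((TT F r s) ^ j) := by
  symm
  apply Submodule.eq_of_le_of_finrank_le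
  · rintro x ⟨v, rfl⟩
    intro n hn
    show pairB F r s n (((TT F r s) ^ j) v) = 0
    rw [← pairB_pow_adjoint, (LinearMap.mem_ker).1 hn, map_zero, LinearMap.zero_apply]
  · have h1 := LinearMap.BilinForm.finrank_orthogonal (B := pairB F r s) pairB_nondeg
      (LinearMap.ker ((TT F r s) ^ j))
    have h2 := LinearMap.finrank_range_add_finrank_ker ((TT F r s) ^ j)
    omega

/-- Main duality consequence: anything orthogonal to `ker T ⊓ range T^j`
lies in `range T + ker T^j`. -/
lemma perp_lemma (j : ℕ) (z : Matrix (Fin r) (Fin s) F)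
    (hz : ∀ u ∈ (LinearMap.ker (TT F r s) ⊓ LinearMap.range ((TT F r s) ^ j) :
      Submodule F (Matrix (Fin r) (Fin s) F)), pairB F r s z u = 0) :
    z ∈ LinearMap.range (TT F r s) ⊔ LinearMap.ker ((TT F r s) ^ j) := by
  have horth : LinearMap.BilinForm.orthogonal (pairB F r s)
      (LinearMap.ker (TT F r s) ⊓ LinearMap.range ((TT F r s) ^ j))
      = LinearMap.range (TT F r s) ⊔ LinearMap.ker ((TT F r s) ^ j) := by
    have h1 : LinearMap.ker (TT F r s) ⊓ LinearMap.range ((TT F r s) ^ j)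
        = LinearMap.BilinForm.orthogonal (pairB F r s)
          (LinearMap.range (TT F r s) ⊔ LinearMap.ker ((TT F r s) ^ j)) := by
      rw [orth_sup, orth_range_T, orth_ker_pow]
    rw [h1, LinearMap.BilinForm.orthogonal_orthogonal (B := pairB F r s) pairB_nondeg pairB_refl]
  rw [← horth]
  intro n hn
  show pairB F r s n z = 0
  rw [pairB_symm]
  exact hz n hn

end Duality

section Ranks

variable {F : Type*} [Field F] {r s : ℕ}

lemma range_pow_succ_le (j : ℕ) :
    LinearMap.range ((TT F r s) ^ (j + 1)) ≤ LinearMap.range ((TT F r s) ^ j) := by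
  rintro x ⟨v, rfl⟩
  have h : (TT F r s) ^ (j + 1) = (TT F r s) ^ j * TT F r s := pow_succ _ _
  rw [h, Module.End.mul_apply]
  exact ⟨TT F r s v, rfl⟩

lemma Kdim (j : ℕ) :
    finrank F ↥(LinearMap.ker (TT F r s) ⊓ LinearMap.range ((TT F r s) ^ j))
      + finrank F ↥(LinearMap.range ((TT F r s) ^ (j + 1)))
      = finrank F ↥(LinearMap.range ((TT F r s) ^ j)) := by
  have h := LinearMap.finrank_range_add_finrank_ker
    ((TT F r s).domRestrict (LinearMap.range ((TT F r s) ^ j)))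
  rw [LinearMap.range_domRestrict, LinearMap.ker_domRestrict] at h
  have h1 : (LinearMap.range ((TT F r s) ^ j)).map (TT F r s)
      = LinearMap.range ((TT F r s) ^ (j + 1)) := by
    rw [pow_succ' (TT F r s) j, Module.End.mul_eq_comp, LinearMap.range_comp]
  have h2 : finrank F ↥((LinearMap.ker (TT F r s)).comap
      (LinearMap.range ((TT F r s) ^ j)).subtype)
      = finrank F ↥(LinearMap.ker (TT F r s) ⊓ LinearMap.range ((TT F r s) ^ j)) := by
    rw [LinearEquiv.finrank_eq (Submodule.equivMapOfInjective _
      (Submodule.injective_subtype _) _), Submodule.map_comap_subtype, inf_comm]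
  rw [h1, h2] at h
  omega

end Ranks

section Kernel

variable {F : Type*} [Field F] {r s : ℕ}

lemma xv_indep (hr : 0 < r) (hs : 0 < s) :
    LinearIndependent F (fun i : Fin (min r s) => xv F r s ((i : ℕ) + 1)) := by
  rw [Fintype.linearIndependent_iff]
  intro γ hsum i
  have hi_s : (i : ℕ) < s := lt_of_lt_of_le i.isLt (Nat.min_le_right r s)
  have happ : (∑ k : Fin (min r s), γ k • xv F r s ((k : ℕ) + 1))
      (⟨0, hr⟩ : Fin r) (⟨(i : ℕ), hi_s⟩ : Fin s) = 0 := by rw [hsum]; rfl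
  rw [Matrix.sum_apply] at happ
  have hval : ∀ k : Fin (min r s),
      (γ k • xv F r s ((k : ℕ) + 1)) (⟨0, hr⟩ : Fin r) (⟨(i : ℕ), hi_s⟩ : Fin s)
        = if k = i then γ k else 0 := by
    intro k
    rw [Matrix.smul_apply, xv_apply, smul_eq_mul]
    by_cases hk : k = i
    · subst hk
      rw [if_pos rfl, if_pos (by simp), pow_zero, mul_one]
    · rw [if_neg hk, if_neg, mul_zero]
      simp only [Fin.val_mk]
      intro hcon
      exact hk (Fin.ext (by omega))
  rw [Finset.sum_congr rfl (fun k _ => hval k)] at happ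
  rw [Finset.sum_ite_eq' Finset.univ i (fun k => γ k)] at happ
  rwa [if_pos (Finset.mem_univ i)] at happ

lemma ker_eq_span (hr : 0 < r) (hs : 0 < s)
    (hdim : finrank F ↥(LinearMap.ker (TT F r s)) = min r s) :
    LinearMap.ker (TT F r s)
      = Submodule.span F (Set.range fun i : Fin (min r s) => xv F r s ((i : ℕ) + 1)) := by
  symm
  apply Submodule.eq_of_le_of_finrank_le
  · rw [Submodule.span_le]
    rintro x ⟨i, rfl⟩
    exact LinearMap.mem_ker.2 (TT_xv _ (by have := i.isLt; omega))
  · have h1 := finrank_span_eq_card (R := F)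
      (b := fun i : Fin (min r s) => xv F r s ((i : ℕ) + 1)) (xv_indep hr hs)
    rw [Fintype.card_fin] at h1
    omega

lemma projM_ker {d : ℕ} {u : Matrix (Fin r) (Fin s) F} (hu : u ∈ LinearMap.ker (TT F r s)) :
    projM F r s d u ∈ LinearMap.ker (TT F r s) := by
  rcases d with _ | e
  · rw [LinearMap.mem_ker, projM_zero_eq, map_zero]
  · rw [LinearMap.mem_ker, TT_projM_succ, LinearMap.mem_ker.1 hu, map_zero]

lemma projM_range_pow {j d : ℕ} {u : Matrix (Fin r) (Fin s) F}
    (hu : u ∈ LinearMap.range ((TT F r s) ^ j)) :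
    projM F r s d u ∈ LinearMap.range ((TT F r s) ^ j) := by
  obtain ⟨w, rfl⟩ := hu
  exact ⟨projM F r s (d + j) w, pow_projM j d w⟩

lemma smul_xv_memK (j : ℕ) {u : Matrix (Fin r) (Fin s) F}
    (hu : u ∈ LinearMap.ker (TT F r s) ⊓ LinearMap.range ((TT F r s) ^ j))
    (γ : Fin (min r s) → F) (hγ : ∑ k, γ k • xv F r s ((k : ℕ) + 1) = u)
    (i : Fin (min r s)) (hi : γ i ≠ 0) :
    xv F r s ((i : ℕ) + 1)
      ∈ LinearMap.ker (TT F r s) ⊓ LinearMap.range ((TT F r s) ^ j) := by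
  have hproj : projM F r s ((i : ℕ) + 1) u = γ i • xv F r s ((i : ℕ) + 1) := by
    rw [← hγ, map_sum]
    rw [Finset.sum_eq_single i]
    · rw [map_smul, projM_eq_self (xv_onDiag _)]
    · intro k _ hk
      rw [map_smul, projM_eq_zero (xv_onDiag _) (fun hcon => hk (Fin.ext (by omega))),
        smul_zero]
    · intro h; exact absurd (Finset.mem_univ i) h
  have hm : γ i • xv F r s ((i : ℕ) + 1)
      ∈ LinearMap.ker (TT F r s) ⊓ LinearMap.range ((TT F r s) ^ j) :=
    hproj ▸ ⟨projM_ker hu.1, projM_range_pow hu.2⟩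
  have h2 := Submodule.smul_mem _ (γ i)⁻¹ hm
  rwa [smul_smul, inv_mul_cancel₀ hi, one_smul] at h2

/-- The key structural lemma: `x_m ∈ range T^j` iff `m ≤ dim (ker T ⊓ range T^j)`. -/
lemma star_lemma (hr : 0 < r) (hs : 0 < s)
    (hdim : finrank F ↥(LinearMap.ker (TT F r s)) = min r s)
    (j : ℕ) (cdj : ℕ)
    (hcd : finrank F ↥(LinearMap.ker (TT F r s) ⊓ LinearMap.range ((TT F r s) ^ j)) = cdj)
    (m : ℕ) (hm1 : 1 ≤ m) (hm2 : m ≤ min r s) :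
    (xv F r s m ∈ LinearMap.range ((TT F r s) ^ j) ↔ m ≤ cdj) := by
  classical
  set K : Submodule F (Matrix (Fin r) (Fin s) F) :=
    LinearMap.ker (TT F r s) ⊓ LinearMap.range ((TT F r s) ^ j) with hK
  set P : ℕ → Prop := fun n => xv F r s (n + 1) ∈ K with hPdef
  have Pdown : ∀ n, n + 2 ≤ min r s → P (n + 1) → P n := by
    intro n h2 hP
    have hS : SS F r s (xv F r s (n + 2)) = - xv F r s (n + 1) := by
      have h := SS_xv (F := F) (r := r) (s := s) (n + 2) (by omega) h2
      rw [show n + 2 - 1 = n + 1 by omega] at h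
      exact h
    have hSK : SS F r s (xv F r s (n + 2)) ∈ K := by
      refine Submodule.mem_inf.2 ⟨?_, ?_⟩
      · rw [LinearMap.mem_ker, TT_SS_comm]
        have hker : TT F r s (xv F r s (n + 2)) = 0 := LinearMap.mem_ker.1 hP.1
        rw [hker, map_zero]
      · obtain ⟨w, hw⟩ := hP.2
        exact ⟨SS F r s w, by rw [← SS_pow_comm, hw]⟩
    rw [hS] at hSK
    simpa [hPdef] using (Submodule.neg_mem_iff K).1 hSK
  have Pdown_le : ∀ t n, n + t + 1 ≤ min r s → P (n + t) → P n := by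
    intro t
    induction t with
    | zero => intro n _ hP; simpa using hP
    | succ t ih =>
      intro n h hP
      exact ih n (by omega) (Pdown (n + t) (by omega) (by
        rw [show n + t + 1 = n + (t + 1) by omega]; exact hP))
  set A : Finset ℕ := (Finset.range (min r s)).filter P with hA
  set f : {n // n ∈ A} → Fin (min r s) :=
    fun a => ⟨a.1, Finset.mem_range.1 (Finset.mem_filter.1 a.2).1⟩ with hf
  have hfinj : Function.Injective f := by
    intro a b hab
    exact Subtype.ext (congrArg Fin.val hab)
  have hsubindep := (xv_indep (F := F) hr hs).comp f hfinj
  have hsp : K = Submodule.span F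
      (Set.range ((fun i : Fin (min r s) => xv F r s ((i : ℕ) + 1)) ∘ f)) := by
    apply le_antisymm
    · intro u hu
      obtain ⟨γ, hγ⟩ := (mem_span_range_iff_exists_fun F).1
        (by rw [← ker_eq_span hr hs hdim]; exact hu.1)
      rw [← hγ]
      apply Submodule.sum_mem
      intro k _
      by_cases hk : γ k = 0
      · rw [hk, zero_smul]; exact Submodule.zero_mem _
      · have hxk : xv F r s ((k : ℕ) + 1) ∈ K := smul_xv_memK j hu γ hγ k hk
        have hmem : (k : ℕ) ∈ A :=
          Finset.mem_filter.2 ⟨Finset.mem_range.2 k.isLt, hxk⟩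
        apply Submodule.smul_mem
        exact Submodule.subset_span ⟨⟨(k : ℕ), hmem⟩, rfl⟩
    · rw [Submodule.span_le]
      rintro x ⟨a, rfl⟩
      exact (Finset.mem_filter.1 a.2).2
  have hcard : A.card = cdj := by
    rw [← hcd, hsp, finrank_span_eq_card hsubindep, Fintype.card_coe]
  have key : ∀ n, n < min r s → (P n ↔ n + 1 ≤ cdj) := by
    intro n hn
    constructor
    · intro hPn
      have hsubset : Finset.range (n + 1) ⊆ A := by
        intro k hk
        have hk' : k < n + 1 := Finset.mem_range.1 hk
        refine Finset.mem_filter.2 ⟨Finset.mem_range.2 (by omega), ?_⟩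
        exact Pdown_le (n - k) k (by omega)
          (by rw [show k + (n - k) = n by omega]; exact hPn)
      calc n + 1 = (Finset.range (n + 1)).card := (Finset.card_range _).symm
        _ ≤ A.card := Finset.card_le_card hsubset
        _ = cdj := hcard
    · intro hle
      by_contra hnP
      have hsub2 : A ⊆ Finset.range n := by
        intro k hk
        have hPk := (Finset.mem_filter.1 hk).2
        have hkc := Finset.mem_range.1 (Finset.mem_filter.1 hk).1
        rw [Finset.mem_range]
        by_contra hkn
        exact hnP (Pdown_le (k - n) n (by omega)
          (by rw [show n + (k - n) = k by omega]; exact hPk))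
      have := Finset.card_le_card hsub2
      rw [hcard, Finset.card_range] at this
      omega
  have hm' : m - 1 + 1 = m := by omega
  constructor
  · intro hmem
    have hPm : P (m - 1) := by
      show xv F r s (m - 1 + 1) ∈ K
      rw [hm']
      exact Submodule.mem_inf.2 ⟨LinearMap.mem_ker.2 (TT_xv m hm2), hmem⟩
    have := (key (m - 1) (by omega)).1 hPm
    omega
  · intro hle
    have hPm : P (m - 1) := (key (m - 1) (by omega)).2 (by omega)
    have hPm' : xv F r s (m - 1 + 1) ∈ K := hPm
    rw [hm'] at hPm'
    exact hPm'.2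

end Kernel

section MainLemmas

variable {F : Type*} [Field F] {r s : ℕ}

lemma preimage_graded {m j : ℕ} (h : xv F r s m ∈ LinearMap.range ((TT F r s) ^ j)) :
    ∃ y, y ∈ WD F r s (m + j) ∧ ((TT F r s) ^ j) y = xv F r s m := by
  obtain ⟨w, hw⟩ := h
  refine ⟨projM F r s (m + j) w, projM_mem_WD _ _, ?_⟩
  rw [pow_projM j m w, hw, projM_eq_self (xv_onDiag m)]

/-- The mirror lemma: if `x_a` lies in `range T^j ∖ range T^{j+1}`, so does the mirror
element `x_b`, `a + b + j = r + s`. -/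
lemma Sprime (hr : 0 < r) (hs : 0 < s)
    (hdim : finrank F ↥(LinearMap.ker (TT F r s)) = min r s)
    (cd : ℕ → ℕ)
    (hcd : ∀ j, finrank F ↥(LinearMap.ker (TT F r s)
      ⊓ LinearMap.range ((TT F r s) ^ j)) = cd j)
    (j a : ℕ) (ha1 : 1 ≤ a) (ha2 : a ≤ min r s)
    (hin : xv F r s a ∈ LinearMap.range ((TT F r s) ^ j))
    (hout : xv F r s a ∉ LinearMap.range ((TT F r s) ^ (j + 1))) :
    ∃ b, 1 ≤ b ∧ b ≤ min r s ∧ a + b + j = r + s ∧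
      xv F r s b ∈ LinearMap.range ((TT F r s) ^ j) ∧
      xv F r s b ∉ LinearMap.range ((TT F r s) ^ (j + 1)) := by
  classical
  obtain ⟨z, hzD, hz⟩ := preimage_graded hin
  by_cases hall : ∀ u ∈ (LinearMap.ker (TT F r s) ⊓ LinearMap.range ((TT F r s) ^ j) :
      Submodule F (Matrix (Fin r) (Fin s) F)), pairB F r s z u = 0
  · exfalso
    have hsup := perp_lemma j z hall
    obtain ⟨v, hv, w, hw, hzvw⟩ := Submodule.mem_sup.1 hsup
    obtain ⟨v0, rfl⟩ := hv
    apply hout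
    have : ((TT F r s) ^ j) z = ((TT F r s) ^ (j + 1)) v0 := by
      rw [← hzvw, map_add, LinearMap.mem_ker.1 hw, add_zero,
        pow_succ (TT F r s) j, Module.End.mul_apply]
    exact ⟨v0, by rw [← this, hz]⟩
  · push_neg at hall
    obtain ⟨u, huK, hne⟩ := hall
    obtain ⟨γ, hγ⟩ := (mem_span_range_iff_exists_fun F).1
      (by rw [← ker_eq_span hr hs hdim]; exact huK.1)
    have hsum : pairB F r s z u
        = ∑ k : Fin (min r s), γ k * pairB F r s z (xv F r s ((k : ℕ) + 1)) := by
      rw [← hγ, map_sum]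
      apply Finset.sum_congr rfl
      intro k _
      rw [map_smul, smul_eq_mul]
    have hex : ∃ k : Fin (min r s), γ k ≠ 0
        ∧ pairB F r s z (xv F r s ((k : ℕ) + 1)) ≠ 0 := by
      by_contra hcon
      push_neg at hcon
      apply hne
      rw [hsum, Finset.sum_eq_zero]
      intro k _
      by_cases hk : γ k = 0
      · rw [hk, zero_mul]
      · rw [hcon k hk, mul_zero]
    obtain ⟨k, hγk, hpk⟩ := hex
    set b : ℕ := (k : ℕ) + 1 with hb
    have hdeg : (a + j) + b = r + s := by
      by_contra hcon
      exact hpk (pairB_deg hzD (xv_onDiag b) hcon)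
    have hbK : xv F r s b ∈ LinearMap.ker (TT F r s)
        ⊓ LinearMap.range ((TT F r s) ^ j) := smul_xv_memK j huK γ hγ k hγk
    refine ⟨b, by omega, by have := k.isLt; omega, by omega, hbK.2, ?_⟩
    intro hbad
    obtain ⟨v, hv⟩ := hbad
    apply hpk
    have hTz : ((TT F r s) ^ (j + 1)) z = 0 := by
      rw [pow_succ' (TT F r s) j, Module.End.mul_apply, hz, TT_xv a ha2]
    calc pairB F r s z (xv F r s b)
        = pairB F r s z (((TT F r s) ^ (j + 1)) v) := by rw [hv]
      _ = pairB F r s (((TT F r s) ^ (j + 1)) z) v := (pairB_pow_adjoint _ _ _).symm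
      _ = 0 := by rw [hTz, map_zero, LinearMap.zero_apply]

lemma claimS (hr : 0 < r) (hs : 0 < s)
    (hdim : finrank F ↥(LinearMap.ker (TT F r s)) = min r s)
    (cd : ℕ → ℕ)
    (hcd : ∀ j, finrank F ↥(LinearMap.ker (TT F r s)
      ⊓ LinearMap.range ((TT F r s) ^ j)) = cd j)
    (hcdle : ∀ j, cd j ≤ min r s)
    (j : ℕ) (hlt : cd (j + 1) < cd j) :
    cd j + cd (j + 1) + j + 1 = r + s := by
  have hstar : ∀ (j' m : ℕ), 1 ≤ m → m ≤ min r s →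
      (xv F r s m ∈ LinearMap.range ((TT F r s) ^ j') ↔ m ≤ cd j') :=
    fun j' m hm1 hm2 => star_lemma hr hs hdim j' (cd j') (hcd j') m hm1 hm2
  -- first application : a = cd j
  have ha1 : (1 : ℕ) ≤ cd j := by omega
  obtain ⟨b1, hb11, hb12, hb13, hb14, hb15⟩ := Sprime hr hs hdim cd hcd j (cd j)
    ha1 (hcdle j)
    ((hstar j (cd j) ha1 (hcdle j)).2 le_rfl)
    (fun hmem => by
      have := (hstar (j + 1) (cd j) ha1 (hcdle j)).1 hmem
      omega)
  have hb1gt : cd (j + 1) < b1 := by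
    by_contra hcon
    exact hb15 ((hstar (j + 1) b1 hb11 hb12).2 (by omega))
  -- second application : a = cd (j+1) + 1
  have ha2' : cd (j + 1) + 1 ≤ min r s := le_trans (by omega) (hcdle j)
  obtain ⟨b2, hb21, hb22, hb23, hb24, hb25⟩ := Sprime hr hs hdim cd hcd j (cd (j + 1) + 1)
    (by omega) ha2'
    ((hstar j (cd (j + 1) + 1) (by omega) ha2').2 (by omega))
    (fun hmem => by
      have := (hstar (j + 1) (cd (j + 1) + 1) (by omega) ha2').1 hmem
      omega)
  have hb2le : b2 ≤ cd j := (hstar j b2 hb21 hb22).1 hb24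
  omega

end MainLemmas

end St

open St Finset Submodule LinearMap Module

/-- unique `y ∈ D_{r+s-l₀}` with `T^{λ-1} y = x_{r+s+1-l₀-λ}`. -/
theorem stmt1 (p : ℕ) (hp : p.Prime) (F : Type*) [Field F] [CharP F p]
    (r s : ℕ) (hr : 0 < r) (hs : 0 < s)
    (lam : ℕ → ℕ) (hlam : IsJordanType F r s lam)
    (l : ℕ) (hl1 : 1 ≤ l) (hl2 : l ≤ min r s)
    (l0 : ℕ) (hl0 : IsLeast {i : ℕ | 1 ≤ i ∧ i ≤ min r s ∧ lam i = lam l} l0) :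
    ∃! y : Matrix (Fin r) (Fin s) F,
      y ∈ Dd F r s (r + s - l0) ∧
      ((TT F r s) ^ (lam l - 1)) y =
        xx F r s ((r : ℤ) + s + 1 - l0 - lam l) := by
  classical
  obtain ⟨⟨hl01, hl02, hl03⟩, hl0min⟩ := hl0
  have hlml : 1 ≤ lam l := hlam.1 l hl1 hl2
  set c' : ℕ := min r s with hc'
  have hc'1 : 1 ≤ c' := by omega
  set R : ℕ → ℕ := fun j => finrank F ↥(LinearMap.range ((TT F r s) ^ j)) with hR
  set cc : ℕ → ℕ := fun t => ((Finset.Icc 1 c').filter fun i => t ≤ lam i).card with hcc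
  -- basic facts about cc
  have hccA : ∀ j : ℕ, cc (j + 1) + R (j + 1) = R j := by
    intro j
    have h1 := hlam.2.2 (j + 1) (by omega)
    rw [show j + 1 - 1 = j by omega] at h1
    have h2 : R (j + 1) ≤ R j := Submodule.finrank_mono (St.range_pow_succ_le j)
    have h3 : cc (j + 1) = R j - R (j + 1) := h1
    omega
  have hR0 : R 0 = r * s := by
    have h2 : LinearMap.range ((TT F r s) ^ 0) = ⊤ := by
      rw [pow_zero]
      exact LinearMap.range_eq_top.2 (fun x => ⟨x, rfl⟩)
    show finrank F ↥(LinearMap.range ((TT F r s) ^ 0)) = r * s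
    rw [h2, finrank_top, Module.finrank_matrix, Fintype.card_fin, Fintype.card_fin,
      Module.finrank_self, mul_one]
  have hcc1 : cc 1 = c' := by
    show ((Finset.Icc 1 c').filter fun i => 1 ≤ lam i).card = c'
    rw [Finset.filter_true_of_mem (fun i hi => show (1:ℕ) ≤ lam i from
      hlam.1 i (Finset.mem_Icc.1 hi).1 (Finset.mem_Icc.1 hi).2), Nat.card_Icc]
    omega
  have hdim : finrank F ↥(LinearMap.ker (TT F r s)) = c' := by
    have h1 := LinearMap.finrank_range_add_finrank_ker (TT F r s)
    have h4 : finrank F (Matrix (Fin r) (Fin s) F) = r * s := by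
      rw [Module.finrank_matrix, Fintype.card_fin, Fintype.card_fin,
        Module.finrank_self, mul_one]
    rw [h4] at h1
    have h2 := hccA 0
    rw [Nat.zero_add] at h2
    have h3 : R 1 = finrank F ↥(LinearMap.range (TT F r s)) := by
      show finrank F ↥(LinearMap.range ((TT F r s) ^ 1)) = _
      rw [pow_one]
    omega
  have hcd : ∀ j : ℕ, finrank F ↥(LinearMap.ker (TT F r s)
      ⊓ LinearMap.range ((TT F r s) ^ j)) = cc (j + 1) := by
    intro j
    have h1 := St.Kdim (F := F) (r := r) (s := s) j
    have h2 := hccA j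
    have e1 : R j = finrank F ↥(LinearMap.range ((TT F r s) ^ j)) := rfl
    have e2 : R (j + 1) = finrank F ↥(LinearMap.range ((TT F r s) ^ (j + 1))) := rfl
    omega
  have hcdle : ∀ t : ℕ, cc t ≤ c' := by
    intro t
    show ((Finset.Icc 1 c').filter fun i => t ≤ lam i).card ≤ c'
    calc ((Finset.Icc 1 c').filter fun i => t ≤ lam i).card
        ≤ (Finset.Icc 1 c').card := Finset.card_le_card (Finset.filter_subset _ _)
      _ = c' := by rw [Nat.card_Icc]; omega
  have hccanti : ∀ t t' : ℕ, t ≤ t' → cc t' ≤ cc t := by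
    intro t t' htt
    apply Finset.card_le_card
    intro i hi
    simp only [Finset.mem_filter] at hi ⊢
    exact ⟨hi.1, by omega⟩
  have hcctop : cc (r + s + 1) = 0 := by
    have h1 := hccA (r + s)
    have h2 : R (r + s) = 0 := by
      show finrank F ↥(LinearMap.range ((TT F r s) ^ (r + s))) = 0
      rw [St.TT_nilpotent, LinearMap.range_zero, finrank_bot]
    omega
  -- the two special values of cc
  have hfilt : (Finset.Icc 1 c').filter (fun i => lam l + 1 ≤ lam i)
      = Finset.Icc 1 (l0 - 1) := by
    ext i
    simp only [Finset.mem_filter, Finset.mem_Icc]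
    constructor
    · rintro ⟨⟨hi1, hi2⟩, hge⟩
      refine ⟨hi1, ?_⟩
      by_contra hcon
      push_neg at hcon
      have hle := hlam.2.1 l0 i hl01 (by omega) hi2
      rw [hl03] at hle
      omega
    · rintro ⟨hi1, hi2⟩
      have hic : i ≤ c' := by omega
      refine ⟨⟨hi1, hic⟩, ?_⟩
      have hge := hlam.2.1 i l0 hi1 (by omega) hl02
      rw [hl03] at hge
      rcases Nat.eq_or_lt_of_le hge with heq | hlt
      · exfalso
        have := hl0min ⟨hi1, hic, heq.symm⟩
        omega
      · omega
  have hclam1 : cc (lam l + 1) = l0 - 1 := by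
    show ((Finset.Icc 1 c').filter fun i => lam l + 1 ≤ lam i).card = l0 - 1
    rw [hfilt, Nat.card_Icc]
    omega
  have hcl0 : l0 ≤ cc (lam l) := by
    have hsub : Finset.Icc 1 l0 ⊆ (Finset.Icc 1 c').filter (fun i => lam l ≤ lam i) := by
      intro i hi
      have hi' := Finset.mem_Icc.1 hi
      refine Finset.mem_filter.2 ⟨Finset.mem_Icc.2 ⟨hi'.1, le_trans hi'.2 hl02⟩, ?_⟩
      have := hlam.2.1 i l0 hi'.1 hi'.2 hl02
      rw [hl03] at this
      exact this
    calc l0 = (Finset.Icc 1 l0).card := by rw [Nat.card_Icc]; omega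
      _ ≤ _ := Finset.card_le_card hsub
  -- main equality via claimS at t = lam l
  have hmain : cc (lam l) + cc (lam l + 1) + lam l = r + s := by
    have hlt : cc (lam l - 1 + 1 + 1) < cc (lam l - 1 + 1) := by
      rw [show lam l - 1 + 1 = lam l by omega]
      omega
    have hS : cc (lam l - 1 + 1) + cc (lam l - 1 + 1 + 1) + (lam l - 1) + 1 = r + s :=
      St.claimS hr hs hdim (fun j => cc (j + 1)) hcd
        (fun j => hcdle (j + 1)) (lam l - 1) hlt
    rw [show lam l - 1 + 1 = lam l by omega] at hS
    omega
  set m0 : ℕ := cc (lam l) with hm0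
  have key : m0 + l0 + lam l = r + s + 1 := by omega
  have hm01 : 1 ≤ m0 := by omega
  have hm0c : m0 ≤ c' := hcdle (lam l)
  -- the dagger inequality
  have hdagger : ∀ h : ℕ, 1 ≤ h → h + 1 ≤ lam l → cc h + l0 + h ≤ r + s := by
    intro h hh1 hh2
    by_cases h0 : cc h = 0
    · omega
    · have hex : ∃ t', h ≤ t' ∧ cc (t' + 1) < cc h :=
        ⟨r + s, by omega, by rw [hcctop]; omega⟩
      obtain ⟨ht1, ht2⟩ := Nat.find_spec hex
      set t1 := Nat.find hex with hdeft1
      have hconst : cc t1 = cc h := by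
        rcases Nat.eq_or_lt_of_le ht1 with he | hlt'
        · rw [← he]
        · apply le_antisymm (hccanti h t1 ht1)
          by_contra hcon
          push_neg at hcon
          have h4 := Nat.find_min hex (show t1 - 1 < t1 by omega)
          push_neg at h4
          have h5 := h4 (by omega)
          rw [show t1 - 1 + 1 = t1 by omega] at h5
          omega
      have ht11 : 1 ≤ t1 := le_trans hh1 ht1
      have hlt2 : cc (t1 - 1 + 1 + 1) < cc (t1 - 1 + 1) := by
        rw [show t1 - 1 + 1 = t1 by omega]
        omega
      have hS2 : cc (t1 - 1 + 1) + cc (t1 - 1 + 1 + 1) + (t1 - 1) + 1 = r + s :=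
        St.claimS hr hs hdim (fun j => cc (j + 1)) hcd
          (fun j => hcdle (j + 1)) (t1 - 1) hlt2
      rw [show t1 - 1 + 1 = t1 by omega] at hS2
      by_cases hcase : lam l ≤ t1
      · have hch : cc (lam l) = cc h :=
          le_antisymm (hccanti h (lam l) (by omega))
            (by rw [← hconst]; exact hccanti (lam l) t1 hcase)
      -- cc h = m0
        omega
      · have h5 : l0 ≤ cc (t1 + 1) :=
          le_trans hcl0 (hccanti (t1 + 1) (lam l) (by omega))
        omega
  -- existence
  have hxm : xv F r s m0 ∈ LinearMap.range ((TT F r s) ^ (lam l - 1)) := by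
    refine (St.star_lemma hr hs hdim (lam l - 1) (cc (lam l - 1 + 1)) (hcd (lam l - 1))
      m0 hm01 hm0c).2 ?_
    rw [show lam l - 1 + 1 = lam l by omega]
  have hcast : ((r : ℤ) + s + 1 - l0 - lam l) = (m0 : ℤ) := by
    have := key
    push_cast
    omega
  obtain ⟨y, hyWD, hy⟩ := St.preimage_graded hxm
  have hidx : r + s - l0 = m0 + (lam l - 1) := by omega
  have hyT : ((TT F r s) ^ (lam l - 1)) y = xx F r s ((r : ℤ) + s + 1 - l0 - lam l) := by
    rw [hcast]
    exact hy
  refine ⟨y, ⟨?_, hyT⟩, ?_⟩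
  · rw [Dd_eq_WD, hidx]
    exact hyWD
  · rintro y' ⟨hy'D, hy'T⟩
    rw [Dd_eq_WD, hidx] at hy'D
    rw [← sub_eq_zero]
    by_contra hzne
    set z := y' - y with hzdef
    have hzD : z ∈ WD F r s (m0 + (lam l - 1)) := Submodule.sub_mem _ hy'D hyWD
    have hzT : ((TT F r s) ^ (lam l - 1)) z = 0 := by
      rw [hzdef, map_sub, hy'T, hyT, sub_self]
    have hfind : ∃ k, ((TT F r s) ^ k) z = 0 := ⟨lam l - 1, hzT⟩
    set h := Nat.find hfind with hdefh
    have hspec : ((TT F r s) ^ h) z = 0 := Nat.find_spec hfind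
    have hh0 : h ≠ 0 := by
      intro h0
      rw [h0, pow_zero] at hspec
      exact hzne (by simpa using hspec)
    have hhle : h ≤ lam l - 1 := Nat.find_le hzT
    set w := ((TT F r s) ^ (h - 1)) z with hwdef
    have hw0 : w ≠ 0 := Nat.find_min hfind (show h - 1 < h by omega)
    have hwker : TT F r s w = 0 := by
      rw [hwdef, ← Module.End.mul_apply, ← pow_succ' (TT F r s) (h - 1),
        show h - 1 + 1 = h by omega]
      exact hspec
    set d := m0 + lam l - h with hdefd
    have hd2 : 2 ≤ d := by omega
    have hwWD : w ∈ WD F r s d := by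
      have hz2 : z ∈ WD F r s (d + (h - 1)) := by
        rw [show d + (h - 1) = m0 + (lam l - 1) by omega]
        exact hzD
      exact St.WD_pow hz2
    obtain ⟨γ, hγ⟩ := (mem_span_range_iff_exists_fun F).1
      (by rw [← St.ker_eq_span hr hs hdim]; exact LinearMap.mem_ker.2 hwker)
    by_cases hd : d ≤ c'
    · set i0 : Fin c' := ⟨d - 1, by omega⟩ with hdefi0
      have hi0v : (i0 : ℕ) + 1 = d := by
        simp only [hdefi0, Fin.val_mk]
        omega
      have hproj : projM F r s d w = γ i0 • xv F r s d := by
        conv_lhs => rw [← hγ]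
        rw [map_sum, Finset.sum_eq_single i0]
        · rw [map_smul, hi0v, St.projM_eq_self (St.xv_onDiag d)]
        · intro k _ hk
          rw [map_smul, St.projM_eq_zero (St.xv_onDiag _)
            (fun hcon => hk (Fin.ext (by
              simp only [hdefi0, Fin.val_mk]
              omega))), smul_zero]
        · exact fun hin => absurd (Finset.mem_univ i0) hin
      have hweq : w = γ i0 • xv F r s d := by
        rw [← hproj, St.projM_eq_self hwWD]
      have hγ0 : γ i0 ≠ 0 := by
        intro h0
        rw [h0, zero_smul] at hweq
        exact hw0 hweq
      have hwrange : w ∈ LinearMap.range ((TT F r s) ^ (h - 1)) := ⟨z, rfl⟩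
      have hxd : xv F r s d ∈ LinearMap.range ((TT F r s) ^ (h - 1)) := by
        have h2 := Submodule.smul_mem _ (γ i0)⁻¹ (hweq ▸ hwrange)
        rwa [smul_smul, inv_mul_cancel₀ hγ0, one_smul] at h2
      have hdle : d ≤ cc (h - 1 + 1) :=
        (St.star_lemma hr hs hdim (h - 1) (cc (h - 1 + 1)) (hcd (h - 1)) d
          (by omega) hd).1 hxd
      rw [show h - 1 + 1 = h by omega] at hdle
      have hdag := hdagger h (by omega) (by omega)
      omega
    · apply hw0
      have hproj : projM F r s d w = 0 := by
        conv_lhs => rw [← hγ]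
        rw [map_sum, Finset.sum_eq_zero]
        intro k _
        rw [map_smul, St.projM_eq_zero (St.xv_onDiag _) (by
          have := k.isLt
          omega), smul_zero]
      rw [← St.projM_eq_self hwWD, hproj]
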